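/- Let 𝒰 be a σ-complete non-principal ultrafilter on Γ and suppose a Banach space E satisfies property (S'). Then the ultrapower E_𝒰 = ℓ∞(Γ, E)/c_𝒰 also satisfies property (S'). -/

import Mathlib

open Filter

/-- The subgroup `c_𝒰` of `ℓ∞(Γ, E)` (bounded families, here `lp _ ⊤`) consisting of
families whose norms tend to `0` along the ultrafilter `𝒰`.  The ultrapower `E_𝒰` is
the quotient `lp (fun _ : Γ => E) ⊤ ⧸ cU 𝒰`, with the quotient norm. -/
noncomputable def cU {Γ E : Type*} [NormedAddCommGroup E] (𝒰 : Ultrafilter Γ) :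
    AddSubgroup (lp (fun _ : Γ => E) ⊤) where
  carrier := {x | Tendsto (fun i => ‖x i‖) (𝒰 : Filter Γ) (nhds 0)}
  add_mem' := by
    intro a b ha hb
    have h := ha.add hb
    rw [add_zero] at h
    refine squeeze_zero (fun i => norm_nonneg _) (fun i => ?_) h
    simp [lp.coeFn_add, norm_add_le]
  zero_mem' := by
    simp [lp.coeFn_zero, tendsto_const_nhds]
  neg_mem' := by
    intro a ha
    simpa [lp.coeFn_neg] using ha

section Aux

variable {Γ E : Type*} [NormedAddCommGroup E]

/-- Every bounded family of norms has a limit along an ultrafilter. -/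
lemma ulim_exists (𝒰 : Ultrafilter Γ) (x : lp (fun _ : Γ => E) ⊤) :
    ∃ L, 0 ≤ L ∧ Tendsto (fun i => ‖x i‖) (𝒰 : Filter Γ) (nhds L) := by
  obtain ⟨L, hL, h⟩ := (isCompact_Icc (a := (0:ℝ)) (b := ‖x‖)).ultrafilter_le_nhds'
    (𝒰.map fun i => ‖x i‖)
    (by rw [Ultrafilter.mem_map]
        exact Filter.univ_mem' fun i =>
          ⟨norm_nonneg _, lp.norm_apply_le_norm ENNReal.top_ne_zero x i⟩)
  exact ⟨L, hL.1, h⟩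

/-- The quotient norm in the ultrapower is the ultralimit of the coordinate norms. -/
lemma norm_mk_eq (𝒰 : Ultrafilter Γ) {x : lp (fun _ : Γ => E) ⊤} {L : ℝ}
    (hL : Tendsto (fun i => ‖x i‖) (𝒰 : Filter Γ) (nhds L)) :
    ‖(QuotientAddGroup.mk x : lp (fun _ : Γ => E) ⊤ ⧸ cU (E := E) 𝒰)‖ = L := by
  have hL0 : 0 ≤ L := le_of_tendsto_of_tendsto' tendsto_const_nhds hL fun i => norm_nonneg _
  apply le_antisymm
  · -- upper bound
    refine le_of_forall_pos_le_add fun ε hε => ?_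
    set wf : ∀ _ : Γ, E := fun i => if ‖x i‖ ≤ L + ε then x i else 0 with hwf
    have hwmem : Memℓp wf ⊤ := by
      apply memℓp_infty
      refine ⟨‖x‖, ?_⟩
      rintro r ⟨i, rfl⟩
      by_cases h : ‖x i‖ ≤ L + ε <;>
        simp [wf, h, lp.norm_apply_le_norm ENNReal.top_ne_zero x i, norm_nonneg x]
    set w : lp (fun _ : Γ => E) ⊤ := ⟨wf, hwmem⟩ with hw
    have hmk : (QuotientAddGroup.mk x : lp (fun _ : Γ => E) ⊤ ⧸ cU (E := E) 𝒰)
        = QuotientAddGroup.mk w := by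
      rw [QuotientAddGroup.eq]
      show Tendsto (fun i => ‖(-x + w) i‖) (𝒰 : Filter Γ) (nhds 0)
      have hev : ∀ᶠ i in (𝒰 : Filter Γ), ‖(-x + w) i‖ = 0 := by
        filter_upwards [hL.eventually_lt_const (lt_add_of_pos_right L hε)] with i hi
        have hthis : wf i = x i := by simp [wf, le_of_lt hi]
        simp [lp.coeFn_add, lp.coeFn_neg, hthis]
        exact neg_add_eq_zero.2 hthis.symm
      exact Tendsto.congr' (hev.mono fun i hi => hi.symm) tendsto_const_nhds
    rw [hmk]
    refine le_trans (QuotientAddGroup.norm_mk_le_norm (S := cU (E := E) 𝒰) (m := w)) ?_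
    refine lp.norm_le_of_forall_le (by positivity) fun i => ?_
    by_cases h : ‖x i‖ ≤ L + ε <;> simp [hw, wf, h] <;> positivity
  · -- lower bound
    rw [show (QuotientAddGroup.mk x : lp (fun _ : Γ => E) ⊤ ⧸ cU (E := E) 𝒰)
        = QuotientAddGroup.mk' _ x from rfl, quotient_norm_mk_eq]
    refine le_csInf ⟨‖x + 0‖, ⟨0, (cU 𝒰).zero_mem, rfl⟩⟩ ?_
    rintro r ⟨s, hs, rfl⟩
    have hs' : Tendsto (fun i => ‖s i‖) (𝒰 : Filter Γ) (nhds 0) := hs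
    have hb : ∀ i, ‖x i‖ ≤ ‖x + s‖ + ‖s i‖ := fun i => by
      calc ‖x i‖ ≤ ‖(x + s) i‖ + ‖s i‖ := by
            simpa [lp.coeFn_add] using norm_sub_le (x i + s i) (s i)
        _ ≤ ‖x + s‖ + ‖s i‖ := by
            gcongr; exact lp.norm_apply_le_norm ENNReal.top_ne_zero _ i
    have := le_of_tendsto_of_tendsto' hL ((tendsto_const_nhds (x := ‖x + s‖)).add hs') hb
    simpa using this

/-- From a σ-complete ultrafilter, a countable union in the ultrafilter has a member in it. -/
lemma sigma_union (𝒰 : Ultrafilter Γ)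
    (hσ : ∀ s : ℕ → Set Γ, (∀ n, s n ∈ 𝒰) → (⋂ n, s n) ∈ 𝒰)
    {s : ℕ → Set Γ} (h : (⋃ n, s n) ∈ 𝒰) : ∃ n, s n ∈ 𝒰 := by
  by_contra hc
  push_neg at hc
  have h2 := hσ (fun n => (s n)ᶜ) fun n => (Ultrafilter.compl_mem_iff_notMem).2 (hc n)
  rw [← Set.compl_iUnion] at h2
  exact (Ultrafilter.compl_mem_iff_notMem.1 h2) h

/-- A σ-complete ultrafilter turns an eventual strict positivity into a uniform one. -/
lemma sigma_pos (𝒰 : Ultrafilter Γ)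
    (hσ : ∀ s : ℕ → Set Γ, (∀ n, s n ∈ 𝒰) → (⋂ n, s n) ∈ 𝒰)
    {f : Γ → ℝ} (h : ∀ᶠ i in (𝒰 : Filter Γ), 0 < f i) :
    ∃ c, 0 < c ∧ ∀ᶠ i in (𝒰 : Filter Γ), c ≤ f i := by
  have hsub : {i | 0 < f i} ⊆ ⋃ n : ℕ, {i | 1 / (n + 1) < f i} := by
    intro i hi
    have hi' : (0:ℝ) < f i := hi
    obtain ⟨n, hn⟩ := exists_nat_one_div_lt hi'
    exact Set.mem_iUnion.2 ⟨n, hn⟩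
  obtain ⟨n, hn⟩ := sigma_union 𝒰 hσ (Filter.mem_of_superset h hsub)
  have hev : ∀ᶠ i in (𝒰 : Filter Γ), 1 / ((n:ℝ) + 1) < f i := hn
  exact ⟨1 / (n + 1), by positivity, hev.mono fun i => le_of_lt⟩

/-- The quantitative conclusion in the ultrapower, from the coordinatewise one. -/
lemma final_step (𝒰 : Ultrafilter Γ)
    (hσ : ∀ s : ℕ → Set Γ, (∀ n, s n ∈ 𝒰) → (⋂ n, s n) ∈ 𝒰)
    {a b z : lp (fun _ : Γ => E) ⊤}
    (hcase : ∀ᶠ i in (𝒰 : Filter Γ), 1 < ‖a i + z i‖ ∧ ‖b i + z i‖ < 1) :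
    1 < ‖(QuotientAddGroup.mk (a + z) : lp (fun _ : Γ => E) ⊤ ⧸ cU (E := E) 𝒰)‖ ∧
    ‖(QuotientAddGroup.mk (b + z) : lp (fun _ : Γ => E) ⊤ ⧸ cU (E := E) 𝒰)‖ < 1 := by
  obtain ⟨La, _, hLa⟩ := ulim_exists 𝒰 (a + z)
  obtain ⟨Lb, _, hLb⟩ := ulim_exists 𝒰 (b + z)
  rw [norm_mk_eq 𝒰 hLa, norm_mk_eq 𝒰 hLb]
  constructor
  · obtain ⟨c, hc, hev⟩ := sigma_pos 𝒰 hσ (f := fun i => ‖(a + z) i‖ - 1)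
      (hcase.mono fun i hi => by simpa [lp.coeFn_add, sub_pos] using hi.1)
    have h1 : 1 + c ≤ La := by
      refine ge_of_tendsto hLa (hev.mono fun i hi => ?_)
      linarith [hi]
    linarith
  · obtain ⟨c, hc, hev⟩ := sigma_pos 𝒰 hσ (f := fun i => 1 - ‖(b + z) i‖)
      (hcase.mono fun i hi => by simpa [lp.coeFn_add, sub_pos] using hi.2)
    have h1 : Lb ≤ 1 - c := by
      refine le_of_tendsto hLb (hev.mono fun i hi => ?_)
      linarith [hi]
    linarith

end Aux

theorem stmt17 {Γ E : Type*} [NormedAddCommGroup E] [NormedSpace ℝ E] [CompleteSpace E]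
    (𝒰 : Ultrafilter Γ)
    (hσ : ∀ s : ℕ → Set Γ, (∀ n, s n ∈ 𝒰) → (⋂ n, s n) ∈ 𝒰)
    (hnp : ∀ i : Γ, (𝒰 : Filter Γ) ≠ pure i)
    (hS' : ∀ x y : E, ‖x‖ = 1 → ‖y‖ = 1 → x ≠ y → ∀ δ : ℝ, 0 < δ →
      ∃ z : E, ‖z‖ < δ ∧
        ((1 < ‖x + z‖ ∧ ‖y + z‖ < 1) ∨ (‖x + z‖ < 1 ∧ 1 < ‖y + z‖))) :
    ∀ x y : lp (fun _ : Γ => E) ⊤ ⧸ cU (E := E) 𝒰,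
      ‖x‖ = 1 → ‖y‖ = 1 → x ≠ y → ∀ δ : ℝ, 0 < δ →
        ∃ z : lp (fun _ : Γ => E) ⊤ ⧸ cU (E := E) 𝒰, ‖z‖ < δ ∧
          ((1 < ‖x + z‖ ∧ ‖y + z‖ < 1) ∨ (‖x + z‖ < 1 ∧ 1 < ‖y + z‖)) := by
  intro x y hx hy hxy δ hδ
  classical
  obtain ⟨a, rfl⟩ := Quotient.exists_rep x
  obtain ⟨b, rfl⟩ := Quotient.exists_rep y
  have hxa : (Quotient.mk _ a : lp (fun _ : Γ => E) ⊤ ⧸ cU (E := E) 𝒰)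
      = QuotientAddGroup.mk a := rfl
  have hyb : (Quotient.mk _ b : lp (fun _ : Γ => E) ⊤ ⧸ cU (E := E) 𝒰)
      = QuotientAddGroup.mk b := rfl
  rw [hxa] at hx hxy ⊢
  rw [hyb] at hy hxy ⊢
  clear hxa hyb
  -- the coordinate norms tend to 1
  obtain ⟨La, _, hLa⟩ := ulim_exists 𝒰 a
  obtain ⟨Lb, _, hLb⟩ := ulim_exists 𝒰 b
  rw [norm_mk_eq 𝒰 hLa] at hx
  rw [norm_mk_eq 𝒰 hLb] at hy
  subst hx; subst hy
  -- the limit of ‖a i - b i‖ is positive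
  obtain ⟨Ld, hLd0, hLd⟩ := ulim_exists 𝒰 (a - b)
  have hLdpos : 0 < Ld := by
    rcases hLd0.lt_or_eq with h | h
    · exact h
    · exfalso
      apply hxy
      rw [QuotientAddGroup.eq]
      show Tendsto (fun i => ‖(-a + b) i‖) (𝒰 : Filter Γ) (nhds 0)
      rw [← h] at hLd
      refine hLd.congr fun i => ?_
      rw [show ((a - b : lp (fun _ : Γ => E) ⊤) : ∀ _ : Γ, E) i = a i - b i from by
            simp [lp.coeFn_sub],
        show ((-a + b : lp (fun _ : Γ => E) ⊤) : ∀ _ : Γ, E) i = -(a i) + b i from by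
            simp [lp.coeFn_add, lp.coeFn_neg],
        ← norm_neg (-(a i) + b i)]
      congr 1
      abel
  -- a unit vector of E
  obtain ⟨i₀, hi₀⟩ := Ultrafilter.nonempty_of_mem
    (hLa.eventually_const_lt (by norm_num : (1:ℝ)/2 < 1))
  have hi₀' : (1:ℝ)/2 < ‖a i₀‖ := hi₀
  have hai₀ : a i₀ ≠ 0 := by
    intro h
    rw [h, norm_zero] at hi₀'
    norm_num at hi₀'
  set u : E := ‖a i₀‖⁻¹ • a i₀ with hu
  have hu1 : ‖u‖ = 1 := by
    rw [hu, norm_smul, norm_inv, norm_norm, inv_mul_cancel₀ (norm_ne_zero_iff.2 hai₀)]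
  -- normalized representatives
  have hnormalize : ∀ e : E, ‖(if e = 0 then u else ‖e‖⁻¹ • e)‖ = 1 := by
    intro e
    by_cases h : e = 0
    · simp [h, hu1]
    · rw [if_neg h, norm_smul, norm_inv, norm_norm, inv_mul_cancel₀ (norm_ne_zero_iff.2 h)]
  set xf : ∀ _ : Γ, E := fun i => if a i = 0 then u else ‖a i‖⁻¹ • a i with hxf
  set yf : ∀ _ : Γ, E := fun i => if b i = 0 then u else ‖b i‖⁻¹ • b i with hyf
  have hxmem : Memℓp xf ⊤ := memℓp_infty ⟨1, by rintro r ⟨i, rfl⟩; exact le_of_eq (hnormalize _)⟩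
  have hymem : Memℓp yf ⊤ := memℓp_infty ⟨1, by rintro r ⟨i, rfl⟩; exact le_of_eq (hnormalize _)⟩
  set xl : lp (fun _ : Γ => E) ⊤ := ⟨xf, hxmem⟩ with hxl
  set yl : lp (fun _ : Γ => E) ⊤ := ⟨yf, hymem⟩ with hyl
  have hxl1 : ∀ i, ‖xl i‖ = 1 := fun i => hnormalize (a i)
  have hyl1 : ∀ i, ‖yl i‖ = 1 := fun i => hnormalize (b i)
  -- the normalized representatives differ from the originals by a `cU` element
  have hdiff : ∀ (c : lp (fun _ : Γ => E) ⊤) (cf : ∀ _ : Γ, E) (hm : Memℓp cf ⊤)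
      (hcf : cf = fun i => if c i = 0 then u else ‖c i‖⁻¹ • c i),
      Tendsto (fun i => ‖c i‖) (𝒰 : Filter Γ) (nhds 1) →
      Tendsto (fun i => ‖(-c + ⟨cf, hm⟩) i‖) (𝒰 : Filter Γ) (nhds 0) := by
    intro c cf hm hcf hc
    have hev : ∀ᶠ i in (𝒰 : Filter Γ), ‖(-c + (⟨cf, hm⟩ : lp (fun _ : Γ => E) ⊤)) i‖
        = |‖c i‖ - 1| := by
      filter_upwards [hc.eventually_const_lt (by norm_num : (1:ℝ)/2 < 1)] with i hi
      have hc0 : c i ≠ 0 := by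
        intro h
        rw [h, norm_zero] at hi
        norm_num at hi
      have hcoe : (-c + (⟨cf, hm⟩ : lp (fun _ : Γ => E) ⊤)) i = -(c i) + cf i := by
        simp [lp.coeFn_add, lp.coeFn_neg]
        rfl
      rw [hcoe, hcf]
      simp only [if_neg hc0]
      have : -(c i) + ‖c i‖⁻¹ • c i = (‖c i‖⁻¹ - 1) • c i := by
        rw [sub_smul, one_smul]
        abel
      rw [this, norm_smul, Real.norm_eq_abs]
      have hne0 : ‖c i‖ ≠ 0 := norm_ne_zero_iff.2 hc0
      have habs : |‖c i‖⁻¹ - 1| * ‖c i‖ = |(‖c i‖⁻¹ - 1) * ‖c i‖| := by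
        rw [abs_mul, abs_of_nonneg (norm_nonneg _)]
      rw [habs, sub_mul, inv_mul_cancel₀ hne0, one_mul, abs_sub_comm]
    have hlim : Tendsto (fun i => |‖c i‖ - 1|) (𝒰 : Filter Γ) (nhds 0) := by
      have := (hc.sub_const 1).abs
      simpa using this
    exact Tendsto.congr' (hev.mono fun i hi => hi.symm) hlim
  have hxcu : Tendsto (fun i => ‖(-a + xl) i‖) (𝒰 : Filter Γ) (nhds 0) :=
    hdiff a xf hxmem hxf hLa
  have hycu : Tendsto (fun i => ‖(-b + yl) i‖) (𝒰 : Filter Γ) (nhds 0) :=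
    hdiff b yf hymem hyf hLb
  have hmkx : (QuotientAddGroup.mk a : lp (fun _ : Γ => E) ⊤ ⧸ cU (E := E) 𝒰)
      = QuotientAddGroup.mk xl := by rw [QuotientAddGroup.eq]; exact hxcu
  have hmky : (QuotientAddGroup.mk b : lp (fun _ : Γ => E) ⊤ ⧸ cU (E := E) 𝒰)
      = QuotientAddGroup.mk yl := by rw [QuotientAddGroup.eq]; exact hycu
  -- eventually the normalized representatives are distinct
  have hne : ∀ᶠ i in (𝒰 : Filter Γ), xl i ≠ yl i := by
    filter_upwards [hxcu.eventually_lt_const (by linarith : (0:ℝ) < Ld/4),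
      hycu.eventually_lt_const (by linarith : (0:ℝ) < Ld/4),
      hLd.eventually_const_lt (by linarith : Ld/2 < Ld)] with i h1 h2 h3
    intro heq
    have heq' : (xl : ∀ _ : Γ, E) i = yl i := heq
    have e1 : ‖xl i - a i‖ < Ld/4 := by
      simpa [lp.coeFn_add, lp.coeFn_neg, neg_add_eq_sub] using h1
    have e2 : ‖yl i - b i‖ < Ld/4 := by
      simpa [lp.coeFn_add, lp.coeFn_neg, neg_add_eq_sub] using h2
    have e3 : Ld/2 < ‖a i - b i‖ := by simpa [lp.coeFn_sub] using h3
    have : a i - b i = (a i - xl i) + (yl i - b i) := by rw [heq']; abel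
    have hle : ‖a i - b i‖ ≤ ‖xl i - a i‖ + ‖yl i - b i‖ := by
      rw [this]
      refine le_trans (norm_add_le _ _) ?_
      rw [norm_sub_rev (a i)]
    linarith
  -- pick the perturbations coordinatewise
  have hhalf : 0 < δ/2 := half_pos hδ
  set zf : ∀ _ : Γ, E := fun i =>
    if h : xl i ≠ yl i then (hS' (xl i) (yl i) (hxl1 i) (hyl1 i) h (δ/2) hhalf).choose
    else 0 with hzf
  have hzb : ∀ i, ‖zf i‖ ≤ δ/2 := by
    intro i
    simp only [hzf]
    by_cases h : xl i ≠ yl i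
    · rw [dif_pos h]
      exact le_of_lt (hS' (xl i) (yl i) (hxl1 i) (hyl1 i) h (δ/2) hhalf).choose_spec.1
    · rw [dif_neg h, norm_zero]; positivity
  have hzmem : Memℓp zf ⊤ := memℓp_infty ⟨δ/2, by rintro r ⟨i, rfl⟩; exact hzb i⟩
  set zl : lp (fun _ : Γ => E) ⊤ := ⟨zf, hzmem⟩ with hzl
  have hzspec : ∀ᶠ i in (𝒰 : Filter Γ),
      (1 < ‖xl i + zl i‖ ∧ ‖yl i + zl i‖ < 1) ∨ (‖xl i + zl i‖ < 1 ∧ 1 < ‖yl i + zl i‖) := by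
    filter_upwards [hne] with i hi
    have hi' : (xl : ∀ _ : Γ, E) i ≠ yl i := hi
    have hz : (zl : ∀ _ : Γ, E) i
        = (hS' (xl i) (yl i) (hxl1 i) (hyl1 i) hi' (δ/2) hhalf).choose := by
      show zf i = _
      simp only [hzf]
      exact dif_pos hi'
    show (1 < ‖xl i + zl i‖ ∧ ‖yl i + zl i‖ < 1) ∨ (‖xl i + zl i‖ < 1 ∧ 1 < ‖yl i + zl i‖)
    rw [hz]
    exact (hS' (xl i) (yl i) (hxl1 i) (hyl1 i) hi' (δ/2) hhalf).choose_spec.2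
  -- the norm of the perturbation is small
  have hznorm : ‖(QuotientAddGroup.mk zl : lp (fun _ : Γ => E) ⊤ ⧸ cU (E := E) 𝒰)‖ < δ := by
    refine lt_of_le_of_lt (QuotientAddGroup.norm_mk_le_norm (S := cU (E := E) 𝒰) (m := zl)) (lt_of_le_of_lt ?_ (half_lt_self hδ))
    exact lp.norm_le_of_forall_le (le_of_lt hhalf) hzb
  -- split into the two cases according to the ultrafilter
  refine ⟨QuotientAddGroup.mk zl, hznorm, ?_⟩
  rw [hmkx, hmky]
  have hsplit : {i | 1 < ‖xl i + zl i‖ ∧ ‖yl i + zl i‖ < 1} ∈ 𝒰 ∨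
      {i | ‖xl i + zl i‖ < 1 ∧ 1 < ‖yl i + zl i‖} ∈ 𝒰 := by
    rw [← Ultrafilter.union_mem_iff]
    exact Filter.mem_of_superset hzspec fun i hi => hi
  have hmkadd : ∀ c : lp (fun _ : Γ => E) ⊤,
      (QuotientAddGroup.mk c : lp (fun _ : Γ => E) ⊤ ⧸ cU (E := E) 𝒰) + QuotientAddGroup.mk zl
      = QuotientAddGroup.mk (c + zl) := fun c => (QuotientAddGroup.mk_add (cU (E := E) 𝒰) c zl).symm
  rcases hsplit with h | h
  · left
    rw [hmkadd xl, hmkadd yl]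
    exact final_step 𝒰 hσ h
  · right
    rw [hmkadd xl, hmkadd yl]
    have := final_step 𝒰 hσ (a := yl) (b := xl) (z := zl)
      (Filter.mem_of_superset h fun i hi => ⟨hi.2, hi.1⟩)
    exact ⟨this.2, this.1⟩
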